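/- Every factor of the Thue–Morse word t of odd length n is a factor of h(v') for some factor v' of t of length (n+1)/2, where h is the Thue–Morse morphism h(0)=01, h(1)=10. -/

import Mathlib

def IsFactor {α : Type*} (u : List α) (w : ℕ → α) : Prop :=
  ∃ i, u = (List.range u.length).map fun j => w (i + j)

def tm : ℕ → Fin 2 := fun n => if (Nat.digits 2 n).sum % 2 = 0 then 0 else 1

/-- The Thue–Morse morphism `h(0) = 01`, `h(1) = 10`. -/
def tmMorph : Fin 2 → List (Fin 2) := fun a => if a = 0 then [0, 1] else [1, 0]

lemma tm_two_mul (n : ℕ) : tm (2*n) = tm n := by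
  rcases Nat.eq_zero_or_pos n with h | h
  · simp [h]
  · unfold tm
    rw [Nat.digits_def' (by norm_num : 1 < 2) (by omega)]
    simp [Nat.mul_div_cancel_left, Nat.mul_mod_right]

lemma tmMorph_tm (n : ℕ) : tmMorph (tm n) = [tm (2*n), tm (2*n+1)] := by
  rw [tm_two_mul]
  unfold tm tmMorph
  rw [Nat.digits_def' (by norm_num : 1 < 2) (by omega : 0 < 2*n+1)]
  have h2 : (2*n+1) % 2 = 1 := by omega
  have h3 : (2*n+1) / 2 = n := by omega
  rw [h2, h3]
  rcases Nat.even_or_odd (Nat.digits 2 n).sum with h | h <;>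
    simp [Nat.even_iff, Nat.odd_iff] at h <;>
    simp [h, Nat.add_mod]

lemma bind_tmMorph (i m : ℕ) :
    ((List.range m).map (fun j => tm (i+j))).flatMap tmMorph
      = (List.range (2*m)).map (fun j => tm (2*i + j)) := by
  show ((List.range m).map (fun j => tm (i+j))).flatMap tmMorph = _
  induction m with
  | zero => simp
  | succ m ih =>
    rw [List.range_succ, List.map_append]
    rw [List.flatMap_append, ih]
    have h : 2*(m+1) = 2*m + 1 + 1 := by ring
    rw [h, List.range_succ, List.range_succ, List.map_append, List.map_append,
      List.append_assoc]
    congr 1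
    simp [tmMorph_tm (i+m), show 2*(i+m) = 2*i + 2*m from by ring,
      show 2*(i+m)+1 = 2*i + (2*m+1) from by ring]
    congr 1

/-- Every factor of the Thue–Morse word of odd length `n` is a factor of `h(v')`
for some factor `v'` of `t` of length `(n+1)/2`. -/
theorem stmt13 (v : List (Fin 2)) (hv : IsFactor v tm) (hodd : v.length % 2 = 1) :
    ∃ v' : List (Fin 2), IsFactor v' tm ∧ v'.length = (v.length + 1) / 2 ∧
      v <:+: v'.flatMap tmMorph := by
  obtain ⟨i, hi⟩ := hv
  have h2m : 2*((v.length+1)/2) = v.length + 1 := by omega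
  refine ⟨(List.range ((v.length+1)/2)).map (fun j => tm (i/2 + j)), ⟨i/2, by simp⟩, by simp, ?_⟩
  show v <:+: ((List.range ((v.length+1)/2)).map (fun j => tm (i/2 + j))).flatMap tmMorph
  rw [show ((List.range ((v.length+1)/2)).map (fun j => tm (i/2 + j))).flatMap tmMorph = (List.range (2*((v.length+1)/2))).map (fun j => tm (2*(i/2) + j)) from by simpa using bind_tmMorph (i/2) ((v.length+1)/2)]
  set n := v.length
  rcases Nat.even_or_odd i with he | ho <;> [rw [Nat.even_iff] at he; rw [Nat.odd_iff] at ho]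
  · -- i even : v is a prefix
    have hi2 : 2 * (i/2) = i := by omega
    rw [h2m, hi2, List.range_succ, List.map_append, ← hi]
    exact (List.prefix_append _ _).isInfix
  · -- i odd : v is a suffix
    have hi2 : 2 * (i/2) = i - 1 := by omega
    have hi1 : 1 ≤ i := by omega
    rw [h2m, hi2, List.range_succ_eq_map, List.map_cons, List.map_map]
    have : ((List.range n).map ((fun j => tm (i - 1 + j)) ∘ Nat.succ)) = v := by
      rw [hi]
      apply List.map_congr_left
      intro a _
      simp only [Function.comp_apply]
      congr 1
      omega
    rw [this]
    exact (List.suffix_cons _ _).isInfix
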